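/- arXiv:2205.00588 — 2 statements merged into one kernel-verified Lean document; each statement's English description precedes it below -/
import Mathlib

section
/- For every integer n ≥ 2, iidLP^{DP/Proph}_{1,n} = LPrelax_n. -/
open Finset

/-- `iidLP^{DP/Proph}_{1,n}` in its single-unit form. -/
noncomputable def iidLP1 (n : ℕ) : ℝ :=
  sSup {θ : ℝ | ∃ y : ℕ → ℝ,
    (∀ i ∈ Finset.Icc 1 n, 0 ≤ y i) ∧
    (∑ i ∈ Finset.Icc 1 n, y i ≤ 1) ∧
    ∀ κ ∈ Set.Ioc (0:ℝ) 1,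
      (1 - (1 - κ) ^ n) * θ ≤
        ∑ i ∈ Finset.Icc 1 n, min (y i) (κ * (1 - ∑ i' ∈ Finset.Icc 1 (i-1), y i'))}

/-- `LPrelax n`. -/
noncomputable def LPrelax (n : ℕ) : ℝ :=
  sSup {θ : ℝ | 0 < θ ∧ ∃ z : ℕ → ℝ, z 0 = 1 ∧ z n = 0 ∧
    (∀ i, 1 ≤ i → i ≤ n - 1 → z i ∈ Set.Icc (0:ℝ) 1) ∧
    (∀ I, I ≤ n - 1 →
      ((n : ℝ) - 1) * z I ^ ((n : ℝ) / ((n : ℝ) - 1)) ≤ (n : ℝ) * z (I+1) + 1/θ - 1)}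

namespace Stmt17Aux

noncomputable def φf (m : ℕ) (v : ℝ) : ℝ := ((m:ℝ)+1) * v^m - (m:ℝ) * v^(m+1)

noncomputable def Bf (m : ℕ) (u v : ℝ) : ℝ :=
  if u ≤ v then φf m v - u^(m+1) else ((m:ℝ)+1) * v^m * (1-u)

lemma diff_pow_nonneg (m : ℕ) {u v : ℝ} (hu : 0 ≤ u) (hv : 0 ≤ v) :
    0 ≤ (u - v) * (u ^ (m+1) - v ^ (m+1)) := by
  rcases le_total u v with h | h
  · have hp : u ^ (m+1) ≤ v ^ (m+1) := pow_le_pow_left₀ hu h _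
    nlinarith
  · have hp : v ^ (m+1) ≤ u ^ (m+1) := pow_le_pow_left₀ hv h _
    nlinarith

lemma amgm (m : ℕ) {u v : ℝ} (hu : 0 ≤ u) (hv : 0 ≤ v) :
    ((m:ℝ)+1) * u * v ^ m ≤ u ^ (m+1) + (m:ℝ) * v ^ (m+1) := by
  induction m with
  | zero => simp
  | succ k ih =>
    have h2 : v * (((k:ℝ) + 1) * u * v ^ k) ≤ v * (u ^ (k + 1) + (k:ℝ) * v ^ (k + 1)) :=
      mul_le_mul_of_nonneg_left ih hv
    have h1' : 0 ≤ u * u^(k+1) - u * v^(k+1) - v * u^(k+1) + v * v^(k+1) := by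
      nlinarith [diff_pow_nonneg k hu hv]
    push_cast
    calc ((k:ℝ) + 1 + 1) * u * v ^ (k + 1)
        = v * (((k:ℝ) + 1) * u * v ^ k) + u * v^(k+1) := by ring
      _ ≤ v * (u ^ (k + 1) + (k:ℝ) * v ^ (k + 1)) + (u * u^(k+1) - v * u^(k+1) + v * v^(k+1)) := by
          linarith
      _ = u ^ (k + 1 + 1) + ((k:ℝ) + 1) * v ^ (k + 1 + 1) := by ring

lemma φf_nonneg (m : ℕ) {v : ℝ} (hv0 : 0 ≤ v) (hv1 : v ≤ 1) : 0 ≤ φf m v := by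
  have h : φf m v = v^m * (((m:ℝ)+1) - (m:ℝ)*v) := by unfold φf; ring
  rw [h]
  have : 0 ≤ ((m:ℝ)+1) - (m:ℝ)*v := by nlinarith [Nat.cast_nonneg (α := ℝ) m]
  exact mul_nonneg (pow_nonneg hv0 m) this

lemma φf_mono (m : ℕ) {a b : ℝ} (ha0 : 0 ≤ a) (hab : a ≤ b) (hb1 : b ≤ 1) :
    φf m a ≤ φf m b := by
  have hb0 : 0 ≤ b := ha0.trans hab
  have h1 := amgm m hb0 ha0
  have h2 : 0 ≤ ((m:ℝ)+1) * ((1-b)*(b^m - a^m)) :=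
    mul_nonneg (by positivity)
      (mul_nonneg (by linarith) (sub_nonneg.2 (pow_le_pow_left₀ ha0 hab m)))
  have key : φf m b - φf m a =
      (b^(m+1) + (m:ℝ)*a^(m+1) - ((m:ℝ)+1)*b*a^m) + ((m:ℝ)+1)*((1-b)*(b^m - a^m)) := by
    unfold φf; ring
  linarith [key, h1, h2]

lemma φf_one (m : ℕ) : φf m 1 = 1 := by unfold φf; simp

lemma φf_le_one (m : ℕ) {v : ℝ} (hv0 : 0 ≤ v) (hv1 : v ≤ 1) : φf m v ≤ 1 := by
  have := φf_mono m hv0 hv1 le_rfl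
  rwa [φf_one] at this

lemma φf_zero (m : ℕ) (hm : 1 ≤ m) : φf m 0 = 0 := by
  unfold φf
  rw [zero_pow (by omega), zero_pow (by omega)]; ring

/-- The key step lemma. -/
lemma step (m : ℕ) {C u v v' : ℝ} (hC : 0 ≤ C)
    (hv0 : 0 ≤ v) (hvv : v ≤ v') (hv1 : v' ≤ 1) (hu0 : 0 ≤ u) (hu1 : u ≤ 1)
    (hchain : (m:ℝ) * v'^(m+1) ≤ ((m:ℝ)+1) * v^m + C) :
    Bf m u v' ≤ min (φf m v' - φf m v) ((1-u)*(C + φf m v')) + Bf m u v := by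
  have hv'0 : 0 ≤ v' := hv0.trans hvv
  have hCφ : 0 ≤ C + φf m v' := add_nonneg hC (φf_nonneg m hv'0 hv1)
  have hchainφ : ((m:ℝ)+1)*(v'^m - v^m) ≤ C + φf m v' := by
    unfold φf; linarith
  have hpm : v^m ≤ v'^m := pow_le_pow_left₀ hv0 hvv m
  by_cases h1 : u ≤ v
  · have h2 : u ≤ v' := h1.trans hvv
    rw [Bf, Bf, if_pos h1, if_pos h2]
    have hright : φf m v' - φf m v ≤ (1-u)*(C + φf m v') := by
      have s1 : (1-v)*(C + φf m v') ≤ (1-u)*(C + φf m v') :=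
        mul_le_mul_of_nonneg_right (by linarith) hCφ
      have s2 : (1-v)*(((m:ℝ)+1)*(v'^m - v^m)) ≤ (1-v)*(C + φf m v') :=
        mul_le_mul_of_nonneg_left hchainφ (by linarith)
      have key : (1-v)*(((m:ℝ)+1)*(v'^m - v^m)) - (φf m v' - φf m v)
          = (m:ℝ)*v'^(m+1) + v^(m+1) - ((m:ℝ)+1)*v*v'^m := by
        unfold φf; ring
      have ham := amgm m hv0 hv'0
      linarith
    have : φf m v' - φf m v ≤ min (φf m v' - φf m v) ((1-u)*(C + φf m v')) :=
      le_min le_rfl hright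
    linarith
  · push_neg at h1
    by_cases h2 : u ≤ v'
    · rw [Bf, Bf, if_pos h2, if_neg (not_le.2 h1)]
      have hi : φf m v' - u^(m+1) - ((m:ℝ)+1)*v^m*(1-u) ≤ φf m v' - φf m v := by
        have ham := amgm m hu0 hv0
        have key : (φf m v' - φf m v) - (φf m v' - u^(m+1) - ((m:ℝ)+1)*v^m*(1-u))
            = u^(m+1) + (m:ℝ)*v^(m+1) - ((m:ℝ)+1)*u*v^m := by
          unfold φf; ring
        linarith
      have hii : φf m v' - u^(m+1) - ((m:ℝ)+1)*v^m*(1-u) ≤ (1-u)*(C + φf m v') := by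
        have s2 : (1-u)*(((m:ℝ)+1)*(v'^m - v^m)) ≤ (1-u)*(C + φf m v') :=
          mul_le_mul_of_nonneg_left hchainφ (by linarith)
        have ham := amgm m hu0 hv'0
        have key : (1-u)*(((m:ℝ)+1)*(v'^m - v^m))
            - (φf m v' - u^(m+1) - ((m:ℝ)+1)*v^m*(1-u))
            = u^(m+1) + (m:ℝ)*v'^(m+1) - ((m:ℝ)+1)*u*v'^m := by
          unfold φf; ring
        linarith
      have := le_min hi hii
      linarith
    · push_neg at h2
      rw [Bf, Bf, if_neg (not_le.2 h2), if_neg (not_le.2 h1)]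
      have hi : (1-u)*(((m:ℝ)+1)*(v'^m - v^m)) ≤ φf m v' - φf m v := by
        have s1 : (1-u)*(((m:ℝ)+1)*(v'^m - v^m)) ≤ (1-v')*(((m:ℝ)+1)*(v'^m - v^m)) :=
          mul_le_mul_of_nonneg_right (by linarith)
            (mul_nonneg (by positivity) (sub_nonneg.2 hpm))
        have ham := amgm m hv'0 hv0
        have key : (φf m v' - φf m v) - (1-v')*(((m:ℝ)+1)*(v'^m - v^m))
            = v'^(m+1) + (m:ℝ)*v^(m+1) - ((m:ℝ)+1)*v'*v^m := by
          unfold φf; ring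
        linarith
      have hii : (1-u)*(((m:ℝ)+1)*(v'^m - v^m)) ≤ (1-u)*(C + φf m v') :=
        mul_le_mul_of_nonneg_left hchainφ (by linarith)
      have := le_min hi hii
      linarith


lemma Icc_insert_split {a n : ℕ} (h : a ≤ n) :
    Icc a n = insert a (Icc (a+1) n) := by
  ext x; simp only [mem_Icc, mem_insert]; omega

lemma sum_Icc_split (f : ℕ → ℝ) {a n : ℕ} (h : a ≤ n) :
    ∑ i ∈ Icc a n, f i = f a + ∑ i ∈ Icc (a+1) n, f i := by
  rw [Icc_insert_split h, Finset.sum_insert (by simp)]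

lemma sum_Icc_tel (g : ℕ → ℝ) (J : ℕ) :
    ∑ i ∈ Icc 1 J, (g (i-1) - g i) = g 0 - g J := by
  induction J with
  | zero => simp
  | succ k ih =>
    rw [Finset.sum_Icc_succ_top (by omega : 1 ≤ k+1), ih]
    simp

lemma sum_Icc_shift (f : ℕ → ℝ) (a b : ℕ) :
    ∑ i ∈ Icc (a+1) b, f (i-1) = ∑ j ∈ Ico a b, f j := by
  apply Finset.sum_nbij' (fun i => i - 1) (fun j => j + 1)
  · intro i hi; simp only [mem_Icc] at hi; simp only [mem_Ico]; omega
  · intro j hj; simp only [mem_Ico] at hj; simp only [mem_Icc]; omega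
  · intro i hi; simp only [mem_Icc] at hi; omega
  · intro j hj; simp
  · intro i hi; rfl


/-- the z-sequence built from the `u`-chain. -/
noncomputable def zB (m n : ℕ) (θ C : ℝ) (uu : ℕ → ℝ) : ℕ → ℝ :=
  fun I => if I < n then θ * (C + φf m (uu I)) else 0

lemma claimBA (m n : ℕ) (hm : 1 ≤ m) (hnm : n = m + 1)
    {θ C : ℝ} (hθ0 : 0 < θ) (hC : 0 ≤ C)
    (uu : ℕ → ℝ) (huB : ∀ I, I ≤ n → 0 ≤ uu I ∧ uu I ≤ 1)
    (humono : ∀ I, I < n → uu (I+1) ≤ uu I) (hun : uu n = 0)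
    (huchain : ∀ I, I ≤ n - 1 → (m:ℝ) * (uu I)^(m+1) ≤ ((m:ℝ)+1) * (uu (I+1))^m + C)
    {u : ℝ} (hu0 : 0 ≤ u) (hu1 : u ≤ 1) :
    ∀ k, k ≤ n → θ * Bf m u (uu (n - k)) ≤
      ∑ i ∈ Icc (n - k + 1) n, min (zB m n θ C uu (i-1) - zB m n θ C uu i)
        ((1-u) * zB m n θ C uu (i-1)) := by
  intro k
  induction k with
  | zero =>
    intro _
    rw [Nat.sub_zero, Finset.Icc_eq_empty (by omega), Finset.sum_empty, hun]
    have hB : Bf m u 0 ≤ 0 := by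
      unfold Bf
      split
      · have hu : u = 0 := le_antisymm (by assumption) hu0
        rw [hu, φf_zero m hm, zero_pow (by omega)]; norm_num
      · rw [zero_pow (by omega)]; norm_num
    calc θ * Bf m u 0 ≤ θ * 0 := mul_le_mul_of_nonneg_left hB hθ0.le
      _ = 0 := mul_zero θ
  | succ k ih =>
    intro hk1
    set I := n - (k+1) with hI
    have hIn : I < n := by omega
    have hIn1 : I ≤ n - 1 := by omega
    have hI1 : I + 1 = n - k := by omega
    have hI1n : I + 1 ≤ n := by omega
    -- split the sum
    rw [sum_Icc_split _ (by omega : I + 1 ≤ n)]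
    have htail := ih (by omega)
    rw [← hI1] at htail
    -- term bound
    have hzI : zB m n θ C uu I = θ * (C + φf m (uu I)) := by
      unfold zB; rw [if_pos hIn]
    have hterm : θ * min (φf m (uu I) - φf m (uu (I+1))) ((1-u)*(C + φf m (uu I))) ≤
        min (zB m n θ C uu ((I+1)-1) - zB m n θ C uu (I+1))
          ((1-u) * zB m n θ C uu ((I+1)-1)) := by
      have hred : (I+1) - 1 = I := by omega
      rw [hred]
      apply le_min
      · have h1 : θ * min (φf m (uu I) - φf m (uu (I+1))) ((1-u)*(C + φf m (uu I))) ≤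
            θ * (φf m (uu I) - φf m (uu (I+1))) :=
          mul_le_mul_of_nonneg_left (min_le_left _ _) hθ0.le
        refine h1.trans ?_
        rcases lt_or_eq_of_le hI1n with hlt | heq
        · unfold zB; rw [if_pos hIn, if_pos hlt]; ring_nf; rfl
        · unfold zB
          rw [if_pos hIn, if_neg (by omega), heq, hun, φf_zero m hm]
          nlinarith
      · have h1 : θ * min (φf m (uu I) - φf m (uu (I+1))) ((1-u)*(C + φf m (uu I))) ≤
            θ * ((1-u)*(C + φf m (uu I))) :=
          mul_le_mul_of_nonneg_left (min_le_right _ _) hθ0.le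
        refine h1.trans ?_
        rw [hzI]; ring_nf; rfl
    -- step lemma
    have hstep := step m hC (huB (I+1) hI1n).1 (humono I hIn) (huB I hIn.le).2 hu0 hu1
      (huchain I hIn1)
    have hstep' : θ * Bf m u (uu I) ≤
        θ * (min (φf m (uu I) - φf m (uu (I+1))) ((1-u)*(C + φf m (uu I))) + Bf m u (uu (I+1))) :=
      mul_le_mul_of_nonneg_left hstep hθ0.le
    rw [mul_add] at hstep'
    calc θ * Bf m u (uu I) ≤ _ := hstep'
      _ ≤ _ := add_le_add hterm htail


lemma BtoA (n : ℕ) (hn : 2 ≤ n) (θ : ℝ) (hθpos : 0 < θ) (z : ℕ → ℝ)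
    (hz0 : z 0 = 1) (hzn : z n = 0)
    (hzI : ∀ i, 1 ≤ i → i ≤ n-1 → z i ∈ Set.Icc (0:ℝ) 1)
    (hcon : ∀ I, I ≤ n-1 →
      ((n:ℝ)-1) * z I ^ ((n:ℝ)/((n:ℝ)-1)) ≤ (n:ℝ) * z (I+1) + 1/θ - 1) :
    ∃ y : ℕ → ℝ, (∀ i ∈ Icc 1 n, 0 ≤ y i) ∧ (∑ i ∈ Icc 1 n, y i ≤ 1) ∧
      ∀ κ ∈ Set.Ioc (0:ℝ) 1, (1-(1-κ)^n)*θ ≤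
        ∑ i ∈ Icc 1 n, min (y i) (κ*(1 - ∑ i' ∈ Icc 1 (i-1), y i')) := by
  set m := n - 1 with hmdef
  have hm : 1 ≤ m := by omega
  have hnm : n = m + 1 := by omega
  have hcastn : (n:ℝ) = (m:ℝ) + 1 := by rw [hnm]; push_cast; ring
  have hcastm : (n:ℝ) - 1 = (m:ℝ) := by rw [hcastn]; ring
  have hmR : (0:ℝ) < m := by exact_mod_cast hm
  set C := 1/θ - 1 with hCdef
  -- clamped z
  set zc : ℕ → ℝ := fun J => min 1 (max 0 (z J)) with hzc
  have hzc01 : ∀ J, 0 ≤ zc J ∧ zc J ≤ 1 := by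
    intro J
    constructor
    · exact le_min (by norm_num) (le_max_left 0 (z J))
    · exact min_le_left _ _
  have hzceq : ∀ J, J ≤ n → zc J = z J := by
    intro J hJ
    have h01 : 0 ≤ z J ∧ z J ≤ 1 := by
      rcases Nat.eq_zero_or_pos J with h | h
      · rw [h, hz0]; norm_num
      · rcases eq_or_lt_of_le hJ with h' | h'
        · rw [h', hzn]; norm_num
        · have := hzI J h (by omega)
          exact ⟨this.1, this.2⟩
    simp only [hzc]
    rw [max_eq_right h01.1, min_eq_right h01.2]
  -- C ≥ 0
  have hC : 0 ≤ C := by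
    have h := hcon (n-1) le_rfl
    have hzn1 : 0 ≤ z (n-1) := (hzI (n-1) (by omega) le_rfl).1
    have hrp : 0 ≤ z (n-1) ^ ((n:ℝ)/((n:ℝ)-1)) := Real.rpow_nonneg hzn1 _
    have hn1 : (0:ℝ) ≤ (n:ℝ) - 1 := by rw [hcastm]; positivity
    have heq : n - 1 + 1 = n := by omega
    rw [heq, hzn, mul_zero] at h
    rw [hCdef]
    nlinarith [mul_nonneg hn1 hrp]
  have hθ1 : θ ≤ 1 := by
    have h1 : θ * (1/θ) = 1 := by field_simp
    have h2 : 0 ≤ 1/θ - 1 := by rw [← hCdef]; exact hC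
    nlinarith [mul_nonneg hθpos.le h2]
  -- the monotone envelope w
  set w : ℕ → ℝ := fun I => (insert n (Icc I n)).sup' (insert_nonempty _ _) zc with hwdef
  have hw_ge : ∀ I J, I ≤ J → J ≤ n → zc J ≤ w I := by
    intro I J hIJ hJn
    exact Finset.le_sup' zc (by simp only [Finset.mem_insert, Finset.mem_Icc]; omega)
  have hw_le1 : ∀ I, w I ≤ 1 := by
    intro I
    apply Finset.sup'_le
    intro b _
    exact (hzc01 b).2
  have hw_0 : ∀ I, 0 ≤ w I := by
    intro I
    have : zc n ≤ w I := Finset.le_sup' zc (Finset.mem_insert_self n _)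
    have hzcn : zc n = 0 := by rw [hzceq n le_rfl, hzn]
    linarith
  have hw0 : w 0 = 1 := by
    have h1 : zc 0 ≤ w 0 := hw_ge 0 0 le_rfl (by omega)
    have h2 : zc 0 = 1 := by rw [hzceq 0 (by omega), hz0]
    have := hw_le1 0
    linarith
  have hzcn0 : zc n = 0 := by rw [hzceq n le_rfl, hzn]
  have hwn : w n = 0 := by
    apply le_antisymm
    · apply Finset.sup'_le
      intro b hb
      simp only [Finset.mem_insert, Finset.mem_Icc] at hb
      have hbn : b = n := by omega
      rw [hbn, hzcn0]
    · exact hw_0 n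
  have hwmono : ∀ I, w (I+1) ≤ w I := by
    intro I
    apply Finset.sup'_le
    intro b hb
    simp only [Finset.mem_insert, Finset.mem_Icc] at hb
    apply Finset.le_sup' zc
    simp only [Finset.mem_insert, Finset.mem_Icc]
    omega
  have hwsplit : ∀ I, I < n → w I = max (zc I) (w (I+1)) := by
    intro I hIn
    have h1 : insert n (Icc I n) = insert I (insert n (Icc (I+1) n)) := by
      ext x; simp only [Finset.mem_insert, Finset.mem_Icc]; omega
    simp only [hwdef, h1]
    rw [Finset.sup'_insert]
  -- chain for w
  have hp1 : 1 ≤ (n:ℝ)/((n:ℝ)-1) := by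
    rw [hcastm, hcastn, le_div_iff₀ hmR]
    linarith
  have hwchain : ∀ I, I ≤ n-1 →
      ((n:ℝ)-1) * (w I) ^ ((n:ℝ)/((n:ℝ)-1)) ≤ (n:ℝ) * w (I+1) + C := by
    intro I hI
    have hIn : I < n := by omega
    rcases max_choice (zc I) (w (I+1)) with hmax | hmax
    · rw [hwsplit I hIn, hmax, hzceq I hIn.le]
      have h := hcon I hI
      have hz1w : z (I+1) ≤ w (I+1) := by
        rw [← hzceq (I+1) (by omega)]
        exact hw_ge (I+1) (I+1) le_rfl (by omega)
      have : (n:ℝ) * z (I+1) ≤ (n:ℝ) * w (I+1) :=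
        mul_le_mul_of_nonneg_left hz1w (by positivity)
      linarith
    · rw [hwsplit I hIn, hmax]
      set x := w (I+1) with hx
      have hx0 : 0 ≤ x := hw_0 _
      have hx1 : x ≤ 1 := hw_le1 _
      have hxp : x ^ ((n:ℝ)/((n:ℝ)-1)) ≤ x := by
        rcases eq_or_lt_of_le hx0 with h0 | h0
        · rw [← h0, Real.zero_rpow (by positivity)]
        · calc x ^ ((n:ℝ)/((n:ℝ)-1)) ≤ x ^ (1:ℝ) :=
                Real.rpow_le_rpow_of_exponent_ge h0 hx1 hp1
            _ = x := Real.rpow_one x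
      have h1 : ((n:ℝ)-1) * x ^ ((n:ℝ)/((n:ℝ)-1)) ≤ ((n:ℝ)-1) * x :=
        mul_le_mul_of_nonneg_left hxp (by rw [hcastm]; positivity)
      have h2 : ((n:ℝ)-1) * x ≤ (n:ℝ) * x + C := by nlinarith
      exact h1.trans h2
  -- the u-chain
  set uu : ℕ → ℝ := fun I => (w I) ^ ((1:ℝ)/(m:ℝ)) with huu
  have huB : ∀ I, I ≤ n → 0 ≤ uu I ∧ uu I ≤ 1 := by
    intro I _
    exact ⟨Real.rpow_nonneg (hw_0 I) _,
      Real.rpow_le_one (hw_0 I) (hw_le1 I) (by positivity)⟩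
  have humono : ∀ I, I < n → uu (I+1) ≤ uu I := by
    intro I _
    exact Real.rpow_le_rpow (hw_0 _) (hwmono I) (by positivity)
  have huu0 : uu 0 = 1 := by
    simp only [huu, hw0, Real.one_rpow]
  have huun : uu n = 0 := by
    simp only [huu, hwn]
    exact Real.zero_rpow (by positivity)
  have hpow_m : ∀ I, (uu I)^m = w I := by
    intro I
    simp only [huu]
    rw [← Real.rpow_natCast ((w I) ^ ((1:ℝ)/(m:ℝ))) m, ← Real.rpow_mul (hw_0 I)]
    rw [one_div, inv_mul_cancel₀ (by positivity), Real.rpow_one]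
  have hpow_m1 : ∀ I, (uu I)^(m+1) = (w I) ^ ((n:ℝ)/((n:ℝ)-1)) := by
    intro I
    simp only [huu]
    rw [← Real.rpow_natCast ((w I) ^ ((1:ℝ)/(m:ℝ))) (m+1), ← Real.rpow_mul (hw_0 I)]
    congr 1
    rw [hcastm, hcastn]
    push_cast
    field_simp
  have huchain : ∀ I, I ≤ n - 1 →
      (m:ℝ) * (uu I)^(m+1) ≤ ((m:ℝ)+1) * (uu (I+1))^m + C := by
    intro I hI
    have h := hwchain I hI
    rw [← hpow_m1 I, ← hpow_m (I+1)] at h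
    rw [hcastm, hcastn] at h
    linarith
  -- define y
  set zf := zB m n θ C uu with hzf
  refine ⟨fun i => zf (i-1) - zf i, ?_, ?_, ?_⟩
  · -- nonneg
    intro i hi
    simp only [Finset.mem_Icc] at hi
    have hi1 : i - 1 < n := by omega
    have hzfi1 : zf (i-1) = θ * (C + φf m (uu (i-1))) := by
      show zB m n θ C uu (i-1) = _
      unfold zB; rw [if_pos hi1]
    show 0 ≤ zf (i-1) - zf i
    rcases lt_or_eq_of_le hi.2 with hlt | heq
    · have hzfi : zf i = θ * (C + φf m (uu i)) := by
        show zB m n θ C uu i = _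
        unfold zB; rw [if_pos hlt]
      rw [hzfi1, hzfi]
      have hmono : φf m (uu i) ≤ φf m (uu (i-1)) := by
        have h1 : i - 1 + 1 = i := by omega
        have := humono (i-1) (by omega)
        rw [h1] at this
        exact φf_mono m (huB i hi.2).1 this (huB (i-1) (by omega)).2
      nlinarith
    · have hzfi : zf i = 0 := by
        show zB m n θ C uu i = _
        unfold zB; rw [heq, if_neg (lt_irrefl n)]
      rw [hzfi1, hzfi]
      have h1 : 0 ≤ φf m (uu (i-1)) := φf_nonneg m (huB (i-1) (by omega)).1 (huB (i-1) (by omega)).2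
      nlinarith
  · -- sum ≤ 1
    rw [sum_Icc_tel zf n]
    have hzf0 : zf 0 = 1 := by
      show zB m n θ C uu 0 = 1
      unfold zB
      rw [if_pos (show 0 < n by omega), huu0, φf_one, hCdef]
      field_simp
      ring
    have hzfn : zf n = 0 := by
      show zB m n θ C uu n = 0
      unfold zB; rw [if_neg (lt_irrefl n)]
    rw [hzf0, hzfn]
    norm_num
  · -- κ constraint
    intro κ hκ
    obtain ⟨hκ0, hκ1⟩ := hκ
    set u := 1 - κ with hu
    have hu0 : 0 ≤ u := by rw [hu]; linarith
    have hu1 : u ≤ 1 := by rw [hu]; linarith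
    have hzf0 : zf 0 = 1 := by
      show zB m n θ C uu 0 = 1
      unfold zB
      rw [if_pos (show 0 < n by omega), huu0, φf_one, hCdef]
      field_simp
      ring
    -- rewrite the inner sums
    have hinner : ∀ i ∈ Icc 1 n,
        min ((fun i => zf (i-1) - zf i) i) (κ*(1 - ∑ i' ∈ Icc 1 (i-1), (fun i => zf (i-1) - zf i) i'))
        = min (zf (i-1) - zf i) ((1-u) * zf (i-1)) := by
      intro i _
      congr 1
      rw [sum_Icc_tel zf (i-1), hzf0]
      simp only [hu]
      ring
    rw [Finset.sum_congr rfl hinner]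

    have hclaim := claimBA m n hm hnm hθpos hC uu huB humono huun huchain hu0 hu1 n le_rfl
    rw [Nat.sub_self] at hclaim
    have hBf1 : Bf m u (uu 0) = 1 - u^(m+1) := by
      rw [huu0]
      unfold Bf
      rw [if_pos hu1, φf_one]
    rw [hBf1] at hclaim
    have hun' : u^(m+1) = (1-κ)^n := by
      rw [hu, hnm]
    calc (1-(1-κ)^n)*θ = θ * (1 - u^(m+1)) := by rw [hun']; ring
      _ ≤ _ := by
          simpa only [zero_add] using hclaim


lemma sum_Icc_split2 (f : ℕ → ℝ) {a b n : ℕ} (h1 : a ≤ b + 1) (h2 : b ≤ n) :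
    ∑ i ∈ Icc a n, f i = ∑ i ∈ Icc a b, f i + ∑ i ∈ Icc (b+1) n, f i := by
  rw [← Finset.Ico_add_one_right_eq_Icc a n, ← Finset.Ico_add_one_right_eq_Icc a b, ← Finset.Ico_add_one_right_eq_Icc (b+1) n]
  rw [← Finset.sum_Ico_consecutive _ h1 (by omega : b + 1 ≤ n + 1)]

lemma AtoB (n : ℕ) (hn : 2 ≤ n) (θ : ℝ) (hθpos : 0 < θ) (y : ℕ → ℝ)
    (hy0 : ∀ i ∈ Icc 1 n, 0 ≤ y i) (hysum : ∑ i ∈ Icc 1 n, y i ≤ 1)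
    (hκcon : ∀ κ ∈ Set.Ioc (0:ℝ) 1, (1-(1-κ)^n)*θ ≤
      ∑ i ∈ Icc 1 n, min (y i) (κ*(1 - ∑ i' ∈ Icc 1 (i-1), y i'))) :
    ∃ w : ℕ → ℝ, w 0 = 1 ∧ w n = 0 ∧
      (∀ i, 1 ≤ i → i ≤ n-1 → w i ∈ Set.Icc (0:ℝ) 1) ∧
      (∀ I, I ≤ n-1 →
        ((n:ℝ)-1) * w I ^ ((n:ℝ)/((n:ℝ)-1)) ≤ (n:ℝ) * w (I+1) + 1/θ - 1) := by
  have hnR : (0:ℝ) < n := by positivity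
  have hn1R : (0:ℝ) < (n:ℝ) - 1 := by
    have : (2:ℝ) ≤ n := by exact_mod_cast hn
    linarith
  set z : ℕ → ℝ := fun I => 1 - ∑ i ∈ Icc 1 I, y i with hzdef
  have hz0 : z 0 = 1 := by simp [hzdef]
  have hzmem : ∀ I, I ≤ n → 0 ≤ z I ∧ z I ≤ 1 := by
    intro I hI
    constructor
    · have h1 : ∑ i ∈ Icc 1 I, y i ≤ ∑ i ∈ Icc 1 n, y i := by
        apply Finset.sum_le_sum_of_subset_of_nonneg
        · exact Finset.Icc_subset_Icc le_rfl hI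
        · intro i hi _; exact hy0 i hi
      simp only [hzdef]
      linarith
    · have h2 : 0 ≤ ∑ i ∈ Icc 1 I, y i := by
        apply Finset.sum_nonneg
        intro i hi
        simp only [Finset.mem_Icc] at hi
        exact hy0 i (by simp only [Finset.mem_Icc]; omega)
      simp only [hzdef]
      linarith
  set S : ℕ → ℝ := fun I => ∑ i ∈ Ico I n, z i with hSdef
  have hSn : S n = 0 := by simp [hSdef]
  have hSrec : ∀ I, I < n → S I = z I + S (I+1) := by
    intro I hI
    have h1 : Ico I n = insert I (Ico (I+1) n) := by
      ext x; simp only [Finset.mem_insert, Finset.mem_Ico]; omega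
    simp only [hSdef]
    rw [h1, Finset.sum_insert (by simp)]
  have hS_nonneg : ∀ I, 0 ≤ S I := by
    intro I
    apply Finset.sum_nonneg
    intro i hi
    simp only [Finset.mem_Ico] at hi
    exact (hzmem i (by omega)).1
  -- the truncated bound
  have hbound : ∀ κ, κ ∈ Set.Ioc (0:ℝ) 1 → ∀ I, I ≤ n-1 →
      (1-(1-κ)^n)*θ ≤ (1 - z I) + κ * S I := by
    intro κ hκ I hI
    have h0 := hκcon κ hκ
    have hsplit := sum_Icc_split2 (fun i => min (y i) (κ*(1 - ∑ i' ∈ Icc 1 (i-1), y i')))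
      (by omega : 1 ≤ I + 1) (by omega : I ≤ n)
    rw [hsplit] at h0
    have hpart1 : ∑ i ∈ Icc 1 I, min (y i) (κ*(1 - ∑ i' ∈ Icc 1 (i-1), y i'))
        ≤ ∑ i ∈ Icc 1 I, y i :=
      Finset.sum_le_sum (fun i _ => min_le_left _ _)
    have hpart2 : ∑ i ∈ Icc (I+1) n, min (y i) (κ*(1 - ∑ i' ∈ Icc 1 (i-1), y i'))
        ≤ κ * S I := by
      have h2 : ∑ i ∈ Icc (I+1) n, min (y i) (κ*(1 - ∑ i' ∈ Icc 1 (i-1), y i'))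
          ≤ ∑ i ∈ Icc (I+1) n, κ * z (i-1) :=
        Finset.sum_le_sum (fun i _ => min_le_right _ _)
      have h3 : ∑ i ∈ Icc (I+1) n, κ * z (i-1) = κ * S I := by
        rw [← Finset.mul_sum]
        congr 1
        exact sum_Icc_shift z I n
      linarith
    have hzIsum : ∑ i ∈ Icc 1 I, y i = 1 - z I := by
      simp only [hzdef]; ring
    linarith
  -- θ ≤ 1
  have hθ1 : θ ≤ 1 := by
    have h := hκcon 1 (by constructor <;> norm_num)
    have h2 : ∑ i ∈ Icc 1 n, min (y i) (1*(1 - ∑ i' ∈ Icc 1 (i-1), y i'))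
        ≤ ∑ i ∈ Icc 1 n, y i :=
      Finset.sum_le_sum (fun i _ => min_le_left _ _)
    rw [sub_self, zero_pow (by omega : n ≠ 0)] at h
    linarith
  have hCpos : 0 ≤ 1/θ - 1 := by
    have h1 : 1 ≤ 1/θ := by
      rw [le_div_iff₀ hθpos]; linarith
    linarith
  -- the limit argument: n θ ≤ S 0
  have hS0 : (n:ℝ) * θ ≤ S 0 := by
    have hb : ∀ κ ∈ Set.Ioc (0:ℝ) 1, (1-(1-κ)^n)*θ ≤ κ * S 0 := by
      intro κ hκ
      have := hbound κ hκ 0 (by omega)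
      rw [hz0] at this
      linarith
    have hd1 : HasDerivAt (fun x : ℝ => 1 - x) (-1) 0 := by
      simpa using (hasDerivAt_id (0:ℝ)).const_sub 1
    have hd2 : HasDerivAt (fun x : ℝ => (1-x)^n) ((n:ℝ) * (1-0)^(n-1) * (-1)) 0 := hd1.pow n
    have hd3 : HasDerivAt (fun x : ℝ => 1 - (1-x)^n) ((n:ℝ)) 0 := by
      have := hd2.const_sub 1
      norm_num at this ⊢
      convert this using 1
    have htendsA : Filter.Tendsto (fun κ : ℝ => (1 - (1-κ)^n)/κ) (nhdsWithin 0 (Set.Ioi 0))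
        (nhds (n:ℝ)) := by
      have h1 := hasDerivAt_iff_tendsto_slope.1 hd3
      have h2 : Filter.Tendsto (slope (fun x : ℝ => 1 - (1-x)^n) 0)
          (nhdsWithin 0 (Set.Ioi 0)) (nhds (n:ℝ)) :=
        h1.mono_left (nhdsWithin_mono 0 (fun x hx => ne_of_gt hx))
      apply h2.congr'
      filter_upwards [self_mem_nhdsWithin] with κ hκ
      simp only [Set.mem_Ioi] at hκ
      rw [slope_def_field]
      norm_num
    have htendsB : Filter.Tendsto (fun κ : ℝ => θ * ((1 - (1-κ)^n)/κ))
        (nhdsWithin 0 (Set.Ioi 0)) (nhds (θ * n)) := htendsA.const_mul θ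
    rw [mul_comm]
    apply le_of_tendsto htendsB
    filter_upwards [Ioc_mem_nhdsGT_of_mem (show (0:ℝ) ∈ Set.Ico (0:ℝ) 1 by norm_num)]
      with κ hκ
    have hbk := hb κ hκ
    have h2 : θ*((1 - (1-κ)^n)/κ) = ((1 - (1-κ)^n)*θ)/κ := by ring
    rw [h2, div_le_iff₀ hκ.1]
    nlinarith [hbk]
  -- define w
  have hθn : (0:ℝ) < θ * n := by positivity
  refine ⟨fun I => min 1 (S I / (θ * (n:ℝ))), ?_, ?_, ?_, ?_⟩
  · show min 1 (S 0 / (θ * (n:ℝ))) = 1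
    rw [min_eq_left]
    rw [le_div_iff₀ hθn]
    nlinarith [hS0]
  · show min 1 (S n / (θ * (n:ℝ))) = 0
    rw [hSn]
    norm_num
  · intro i _ _
    exact ⟨le_min (by norm_num) (div_nonneg (hS_nonneg i) hθn.le), min_le_left _ _⟩
  · intro I hI
    rcases le_or_gt (θ*(n:ℝ)) (S I) with hcap | huncap
    · have hwI : min 1 (S I / (θ * (n:ℝ))) = 1 := by
        rw [min_eq_left]
        rw [le_div_iff₀ hθn]
        linarith
      show ((n:ℝ)-1) * (min 1 (S I / (θ * (n:ℝ)))) ^ ((n:ℝ)/((n:ℝ)-1)) ≤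
        (n:ℝ) * min 1 (S (I+1) / (θ * (n:ℝ))) + 1/θ - 1
      rw [hwI, Real.one_rpow]
      rcases le_or_gt (θ*(n:ℝ)) (S (I+1)) with hcap2 | hcap2
      · have hwI1 : min 1 (S (I+1) / (θ * (n:ℝ))) = 1 := by
          rw [min_eq_left]
          rw [le_div_iff₀ hθn]
          linarith
        rw [hwI1]
        linarith
      · have hwI1 : min 1 (S (I+1) / (θ * (n:ℝ))) = S (I+1) / (θ * (n:ℝ)) :=
          min_eq_right (le_of_lt ((div_lt_one hθn).2 hcap2))
        rw [hwI1]
        have hkey : (n:ℝ)*θ ≤ S (I+1) + 1 := by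
          have h1 := hSrec I (by omega)
          have h2 := (hzmem I (by omega)).2
          linarith
        have he : (n:ℝ)*(S (I+1)/(θ*(n:ℝ))) = S (I+1)/θ := by
          field_simp
        have h3 : (S (I+1)+1)/θ = S (I+1)/θ + 1/θ := add_div _ _ _
        have h2 : (n:ℝ) ≤ (S (I+1) + 1)/θ := by
          rw [le_div_iff₀ hθpos]
          linarith
        rw [he]
        linarith
    · have hS1le : S (I+1) ≤ S I := by
        have h1 := hSrec I (by omega)
        have h2 := (hzmem I (by omega)).1
        linarith
      set x := S I / (θ * (n:ℝ)) with hxdef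
      have hwI : min 1 x = x :=
        min_eq_right (le_of_lt ((div_lt_one hθn).2 huncap))
      have hwI1 : min 1 (S (I+1) / (θ * (n:ℝ))) = S (I+1) / (θ * (n:ℝ)) :=
        min_eq_right (le_of_lt ((div_lt_one hθn).2 (lt_of_le_of_lt hS1le huncap)))
      show ((n:ℝ)-1) * (min 1 x) ^ ((n:ℝ)/((n:ℝ)-1)) ≤
        (n:ℝ) * min 1 (S (I+1) / (θ * (n:ℝ))) + 1/θ - 1
      rw [hwI, hwI1]
      have hx0 : 0 ≤ x := div_nonneg (hS_nonneg I) hθn.le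
      have hx1 : x < 1 := (div_lt_one hθn).2 huncap
      have he : (n:ℝ)*(S (I+1)/(θ*(n:ℝ))) = S (I+1)/θ := by
        field_simp
      rw [he]
      rcases eq_or_lt_of_le hx0 with hx00 | hxpos
      · rw [← hx00, Real.zero_rpow (by positivity : (n:ℝ)/((n:ℝ)-1) ≠ 0)]
        have h4 : 0 ≤ S (I+1)/θ := div_nonneg (hS_nonneg (I+1)) hθpos.le
        linarith
      · set X := x ^ ((n:ℝ)/((n:ℝ)-1)) with hXdef
        set u := x ^ (1/((n:ℝ)-1)) with hudef
        have hu_pos : 0 < u := Real.rpow_pos_of_pos hxpos _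
        have hu_lt1 : u < 1 := Real.rpow_lt_one hx0 hx1 (by positivity)
        have hu_pow : u ^ n = X := by
          rw [hudef, hXdef, ← Real.rpow_natCast (x ^ (1/((n:ℝ)-1))) n,
            ← Real.rpow_mul hx0]
          congr 1
          ring
        have hu_x : u * x = X := by
          have h5 : x ^ (1/((n:ℝ)-1) + 1) = x ^ (1/((n:ℝ)-1)) * x ^ (1:ℝ) :=
            Real.rpow_add hxpos _ _
          rw [Real.rpow_one] at h5
          rw [hudef, hXdef, ← h5]
          congr 1
          field_simp
          ring
        have happ := hbound (1-u) ⟨by linarith, by linarith⟩ I hI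
        rw [show (1:ℝ) - (1-u) = u by ring] at happ
        rw [hu_pow] at happ
        have hSx : S I = θ*(n:ℝ)*x := by
          rw [hxdef]
          field_simp
        have hzI : z I = S I - S (I+1) := by
          have := hSrec I (by omega)
          linarith
        have hux : (1-u) * S I = S I - θ*(n:ℝ)*X := by
          calc (1-u) * S I = θ*(n:ℝ)*x - θ*(n:ℝ)*(u*x) := by rw [hSx]; ring
            _ = S I - θ*(n:ℝ)*X := by rw [hu_x, ← hSx]
        rw [hzI, hux] at happ
        rw [← mul_le_mul_iff_of_pos_left hθpos]
        have hr : θ*(S (I+1)/θ + 1/θ - 1) = S (I+1) + 1 - θ := by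
          field_simp
        rw [hr]
        nlinarith [happ]


end Stmt17Aux

open Stmt17Aux in
/-- Lemma `LPequivalent`: `iidLP^{DP/Proph}_{1,n} = LPrelax_n`. -/
theorem stmt17 (n : ℕ) (hn : 2 ≤ n) : iidLP1 n = LPrelax n := by
  have hnpos : (0:ℝ) < 1/(n:ℝ) := by positivity
  have hBmem : (1/(n:ℝ)) ∈ {θ : ℝ | 0 < θ ∧ ∃ z : ℕ → ℝ, z 0 = 1 ∧ z n = 0 ∧
      (∀ i, 1 ≤ i → i ≤ n - 1 → z i ∈ Set.Icc (0:ℝ) 1) ∧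
      (∀ I, I ≤ n - 1 →
        ((n : ℝ) - 1) * z I ^ ((n : ℝ) / ((n : ℝ) - 1)) ≤
          (n : ℝ) * z (I+1) + 1/(1/(n:ℝ)) - 1)} := by
    refine ⟨hnpos, fun I => if I < n then 1 else 0, ?_, ?_, ?_, ?_⟩
    · show (if 0 < n then (1:ℝ) else 0) = 1
      rw [if_pos (by omega : 0 < n)]
    · show (if n < n then (1:ℝ) else 0) = 0
      rw [if_neg (lt_irrefl n)]
    · intro i _ _
      show (if i < n then (1:ℝ) else 0) ∈ Set.Icc (0:ℝ) 1
      by_cases h : i < n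
      · rw [if_pos h]; constructor <;> norm_num
      · rw [if_neg h]; constructor <;> norm_num
    · intro I hI
      show ((n:ℝ) - 1) * (if I < n then (1:ℝ) else 0) ^ ((n:ℝ)/((n:ℝ)-1)) ≤
        (n:ℝ) * (if I + 1 < n then (1:ℝ) else 0) + 1/(1/(n:ℝ)) - 1
      rw [if_pos (by omega : I < n), Real.one_rpow, one_div_one_div]
      by_cases h : I + 1 < n
      · rw [if_pos h]
        have : (2:ℝ) ≤ n := by exact_mod_cast hn
        linarith
      · rw [if_neg h]
        linarith
  have hBsubA : {θ : ℝ | 0 < θ ∧ ∃ z : ℕ → ℝ, z 0 = 1 ∧ z n = 0 ∧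
      (∀ i, 1 ≤ i → i ≤ n - 1 → z i ∈ Set.Icc (0:ℝ) 1) ∧
      (∀ I, I ≤ n - 1 →
        ((n : ℝ) - 1) * z I ^ ((n : ℝ) / ((n : ℝ) - 1)) ≤ (n : ℝ) * z (I+1) + 1/θ - 1)} ⊆
    {θ : ℝ | ∃ y : ℕ → ℝ,
      (∀ i ∈ Finset.Icc 1 n, 0 ≤ y i) ∧
      (∑ i ∈ Finset.Icc 1 n, y i ≤ 1) ∧
      ∀ κ ∈ Set.Ioc (0:ℝ) 1,
        (1 - (1 - κ) ^ n) * θ ≤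
          ∑ i ∈ Finset.Icc 1 n, min (y i) (κ * (1 - ∑ i' ∈ Finset.Icc 1 (i-1), y i'))} := by
    rintro θ ⟨hθpos, z, hz0, hzn, hzI, hcon⟩
    exact BtoA n hn θ hθpos z hz0 hzn hzI hcon
  have hApos : ∀ θ : ℝ, 0 < θ → θ ∈ {θ : ℝ | ∃ y : ℕ → ℝ,
      (∀ i ∈ Finset.Icc 1 n, 0 ≤ y i) ∧
      (∑ i ∈ Finset.Icc 1 n, y i ≤ 1) ∧
      ∀ κ ∈ Set.Ioc (0:ℝ) 1,
        (1 - (1 - κ) ^ n) * θ ≤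
          ∑ i ∈ Finset.Icc 1 n, min (y i) (κ * (1 - ∑ i' ∈ Finset.Icc 1 (i-1), y i'))} →
      θ ∈ {θ : ℝ | 0 < θ ∧ ∃ z : ℕ → ℝ, z 0 = 1 ∧ z n = 0 ∧
      (∀ i, 1 ≤ i → i ≤ n - 1 → z i ∈ Set.Icc (0:ℝ) 1) ∧
      (∀ I, I ≤ n - 1 →
        ((n : ℝ) - 1) * z I ^ ((n : ℝ) / ((n : ℝ) - 1)) ≤ (n : ℝ) * z (I+1) + 1/θ - 1)} := by
    rintro θ hθpos ⟨y, hy0, hysum, hκ⟩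
    obtain ⟨w, hw0, hwn, hwmem, hwcon⟩ := AtoB n hn θ hθpos y hy0 hysum hκ
    exact ⟨hθpos, w, hw0, hwn, hwmem, hwcon⟩
  have hA1 : ∀ θ ∈ {θ : ℝ | ∃ y : ℕ → ℝ,
      (∀ i ∈ Finset.Icc 1 n, 0 ≤ y i) ∧
      (∑ i ∈ Finset.Icc 1 n, y i ≤ 1) ∧
      ∀ κ ∈ Set.Ioc (0:ℝ) 1,
        (1 - (1 - κ) ^ n) * θ ≤
          ∑ i ∈ Finset.Icc 1 n, min (y i) (κ * (1 - ∑ i' ∈ Finset.Icc 1 (i-1), y i'))},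
      θ ≤ (1:ℝ) := by
    rintro θ ⟨y, hy0, hysum, hκ⟩
    have h := hκ 1 (by constructor <;> norm_num)
    have h2 : ∑ i ∈ Finset.Icc 1 n, min (y i) (1*(1 - ∑ i' ∈ Finset.Icc 1 (i-1), y i'))
        ≤ ∑ i ∈ Finset.Icc 1 n, y i :=
      Finset.sum_le_sum (fun i _ => min_le_left _ _)
    rw [sub_self, zero_pow (by omega : n ≠ 0)] at h
    linarith
  unfold iidLP1 LPrelax
  have hAbdd : BddAbove {θ : ℝ | ∃ y : ℕ → ℝ,
      (∀ i ∈ Finset.Icc 1 n, 0 ≤ y i) ∧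
      (∑ i ∈ Finset.Icc 1 n, y i ≤ 1) ∧
      ∀ κ ∈ Set.Ioc (0:ℝ) 1,
        (1 - (1 - κ) ^ n) * θ ≤
          ∑ i ∈ Finset.Icc 1 n, min (y i) (κ * (1 - ∑ i' ∈ Finset.Icc 1 (i-1), y i'))} :=
    ⟨1, hA1⟩
  have hBbdd : BddAbove {θ : ℝ | 0 < θ ∧ ∃ z : ℕ → ℝ, z 0 = 1 ∧ z n = 0 ∧
      (∀ i, 1 ≤ i → i ≤ n - 1 → z i ∈ Set.Icc (0:ℝ) 1) ∧
      (∀ I, I ≤ n - 1 →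
        ((n : ℝ) - 1) * z I ^ ((n : ℝ) / ((n : ℝ) - 1)) ≤ (n : ℝ) * z (I+1) + 1/θ - 1)} :=
    ⟨1, fun θ hθ => hA1 θ (hBsubA hθ)⟩
  have hBne : Set.Nonempty {θ : ℝ | 0 < θ ∧ ∃ z : ℕ → ℝ, z 0 = 1 ∧ z n = 0 ∧
      (∀ i, 1 ≤ i → i ≤ n - 1 → z i ∈ Set.Icc (0:ℝ) 1) ∧
      (∀ I, I ≤ n - 1 →
        ((n : ℝ) - 1) * z I ^ ((n : ℝ) / ((n : ℝ) - 1)) ≤ (n : ℝ) * z (I+1) + 1/θ - 1)} :=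
    ⟨1/(n:ℝ), hBmem⟩
  have hAne : Set.Nonempty {θ : ℝ | ∃ y : ℕ → ℝ,
      (∀ i ∈ Finset.Icc 1 n, 0 ≤ y i) ∧
      (∑ i ∈ Finset.Icc 1 n, y i ≤ 1) ∧
      ∀ κ ∈ Set.Ioc (0:ℝ) 1,
        (1 - (1 - κ) ^ n) * θ ≤
          ∑ i ∈ Finset.Icc 1 n, min (y i) (κ * (1 - ∑ i' ∈ Finset.Icc 1 (i-1), y i'))} :=
    ⟨1/(n:ℝ), hBsubA hBmem⟩
  apply le_antisymm
  · apply csSup_le hAne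
    intro θ hθ
    rcases le_or_gt θ 0 with hle | hpos
    · have h1 : (1/(n:ℝ)) ≤ sSup {θ : ℝ | 0 < θ ∧ ∃ z : ℕ → ℝ, z 0 = 1 ∧ z n = 0 ∧
          (∀ i, 1 ≤ i → i ≤ n - 1 → z i ∈ Set.Icc (0:ℝ) 1) ∧
          (∀ I, I ≤ n - 1 →
            ((n : ℝ) - 1) * z I ^ ((n : ℝ) / ((n : ℝ) - 1)) ≤ (n : ℝ) * z (I+1) + 1/θ - 1)} :=
        le_csSup hBbdd hBmem
      linarith
    · exact le_csSup hBbdd (hApos θ hpos hθ)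
  · exact csSup_le_csSup hAbdd hBne hBsubA
end

section
/- For every integer n ≥ 2, LPrelax_n ≥ LPrelax_{2n}. -/
lemma lemA {s t q : ℝ} (ht0 : 0 ≤ t) (hts : t ≤ s) (hs1 : s ≤ 1) (hq : 1 ≤ q) :
    s ^ q - t ^ q ≤ q * (s - t) := by
  rcases eq_or_lt_of_le (ht0.trans hts) with h0 | hs0
  · have ht : t = 0 := le_antisymm (hts.trans h0.symm.le) ht0
    simp [ht, ← h0, Real.zero_rpow (by positivity : q ≠ 0)]
  · have hq0 : (0:ℝ) < q := by linarith
    have hbern : 1 + q * (t / s - 1) ≤ (1 + (t / s - 1)) ^ q :=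
      one_add_mul_self_le_rpow_one_add (by
        have : 0 ≤ t / s := div_nonneg ht0 hs0.le
        linarith) hq
    have hts' : t / s ≤ 1 := div_le_one_of_le₀ hts hs0.le
    rw [add_sub_cancel] at hbern
    have hdiv : (t / s) ^ q = t ^ q / s ^ q := Real.div_rpow ht0 hs0.le q
    have hsq0 : 0 < s ^ q := Real.rpow_pos_of_pos hs0 q
    have hsqs : s ^ q ≤ s := by
      have := Real.rpow_le_rpow_of_exponent_ge hs0 hs1 hq
      simpa using this
    have h1 : (1 + q * (t/s - 1)) * s ^ q ≤ t ^ q := by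
      have := mul_le_mul_of_nonneg_right hbern hsq0.le
      rwa [hdiv, div_mul_cancel₀ _ hsq0.ne'] at this
    have h2 : s ^ q - t ^ q ≤ q * (1 - t/s) * s ^ q := by nlinarith [h1]
    have h3 : q * (1 - t/s) * s ^ q ≤ q * (1 - t/s) * s := by
      apply mul_le_mul_of_nonneg_left hsqs
      have h5 : 0 ≤ 1 - t/s := by linarith
      positivity
    have h4 : q * (1 - t/s) * s = q * (s - t) := by
      field_simp
    linarith

lemma lemC {m : ℝ} (hm : 3 ≤ m) :
    (m - 1) / m ≤ (m / (m + 1)) ^ ((m + 1) / m) := by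
  have hm0 : (0:ℝ) < m := by linarith
  have hm1 : (0:ℝ) < m - 1 := by linarith
  have hm2 : (0:ℝ) < m^2 - 1 := by nlinarith
  have hb0 : (0:ℝ) < 1 + 1/(m^2 - 1) := by positivity
  have hpos' : (0:ℝ) < 1/(m^2-1) := by positivity
  have hbern : 1 + m * (1/(m^2-1)) ≤ (1 + 1/(m^2-1)) ^ m :=
    one_add_mul_self_le_rpow_one_add (by linarith) (by linarith)
  have h1 : (m+1)/m ≤ (1 + 1/(m^2-1)) ^ m := by
    refine le_trans ?_ hbern
    rw [div_le_iff₀ hm0]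
    have key : ((1:ℝ) + m * (1/(m^2-1))) * m - (m+1) = 1/(m^2-1) := by
      field_simp
      ring
    have : (0:ℝ) < 1/(m^2-1) := by positivity
    linarith
  -- take (1/m)-th power
  have h2 : ((m+1)/m) ^ (1/m) ≤ 1 + 1/(m^2-1) := by
    have := Real.rpow_le_rpow (by positivity) h1 (by positivity : (0:ℝ) ≤ 1/m)
    rwa [← Real.rpow_mul hb0.le, mul_one_div, div_self hm0.ne', Real.rpow_one] at this
  have hx : (0:ℝ) < (m+1)/m := by positivity
  have h3 : ((m+1)/m) ^ ((m+1)/m) ≤ m/(m-1) := by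
    have hsplit : ((m+1)/m : ℝ) ^ ((m+1)/m) = ((m+1)/m) * ((m+1)/m) ^ (1/m) := by
      nth_rewrite 2 [show (m+1)/m = 1 + 1/m by field_simp]
      rw [Real.rpow_add hx, Real.rpow_one]
    rw [hsplit]
    have h4 : ((m+1)/m) * ((m+1)/m) ^ (1/m) ≤ ((m+1)/m) * (1 + 1/(m^2-1)) :=
      mul_le_mul_of_nonneg_left h2 hx.le
    have h5 : ((m+1)/m) * (1 + 1/(m^2-1)) = m/(m-1) := by
      field_simp
      ring
    linarith
  -- invert
  have hpow0 : 0 < ((m+1)/m) ^ ((m+1)/m) := Real.rpow_pos_of_pos hx _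
  have hinv : (m / (m + 1)) ^ ((m + 1) / m) = (((m+1)/m) ^ ((m+1)/m))⁻¹ := by
    rw [show m/(m+1) = ((m+1)/m)⁻¹ by rw [inv_div], Real.inv_rpow hx.le]
  rw [hinv]
  rw [le_inv_comm₀ (by positivity) hpow0]
  calc ((m+1)/m) ^ ((m+1)/m) ≤ m/(m-1) := h3
    _ = ((m-1)/m)⁻¹ := by rw [inv_div]

set_option maxHeartbeats 1000000 in
lemma step {N c x y v : ℝ} (hN : 2 ≤ N) (hc : 0 ≤ c) (hx0 : 0 ≤ x) (hx1 : x ≤ 1) (hy0 : 0 ≤ y)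
    (h1 : (2*N - 1) * x ^ ((2*N) / (2*N - 1)) ≤ 2*N * y + c)
    (h2 : (2*N - 1) * y ^ ((2*N) / (2*N - 1)) ≤ 2*N * v + c) :
    (N - 1) * x ^ (N / (N - 1)) ≤ N * v + c := by
  have hm3 : (3:ℝ) ≤ 2*N - 1 := by linarith
  have hm0 : (0:ℝ) < 2*N - 1 := by linarith
  have hm1 : (0:ℝ) < 2*N - 2 := by linarith
  have hN1 : (0:ℝ) < N - 1 := by linarith
  set q : ℝ := (2*N) / (2*N - 1) with hq_def
  set r : ℝ := (2*N - 1) / (2*N - 2) with hr_def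
  have hq1 : 1 ≤ q := by
    rw [hq_def, le_div_iff₀ hm0]; linarith
  have hq0 : 0 ≤ q := by linarith
  have hr1 : 1 ≤ r := by
    rw [hr_def, le_div_iff₀ hm1]; linarith
  have hqr : q ≤ r := by
    rw [hq_def, hr_def, div_le_div_iff₀ hm0 hm1]; nlinarith
  set u : ℝ := x ^ q with hu_def
  have hu0 : 0 ≤ u := Real.rpow_nonneg hx0 q
  have hu1 : u ≤ 1 := Real.rpow_le_one hx0 hx1 hq0
  have hxp : x ^ (N / (N - 1)) = u ^ r := by
    rw [hu_def, ← Real.rpow_mul hx0]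
    congr 1
    rw [hq_def, hr_def]
    rw [div_mul_div_comm, div_eq_div_iff hN1.ne' (mul_pos hm0 hm1).ne']
    ring
  have hyq0 : 0 ≤ y ^ q := Real.rpow_nonneg hy0 q
  -- main claim
  have key : (2*N - 2) * u ^ r ≤ (2*N - 1) * y ^ q + c := by
    by_cases hcase : (2*N - 1) * u ≤ c
    · have huu : u ^ r ≤ u := by
        have := Real.rpow_le_rpow_of_exponent_ge' hu0 hu1 zero_le_one hr1
        simpa using this
      linarith [mul_le_mul_of_nonneg_left huu hm1.le, mul_nonneg hm0.le hyq0]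
    · push_neg at hcase
      set s : ℝ := (2*N - 1) * u / (2*N) with hs_def
      set t : ℝ := ((2*N - 1) * u - c) / (2*N) with ht_def
      have h2N : (0:ℝ) < 2*N := by linarith
      have ht0 : 0 ≤ t := by rw [ht_def]; apply div_nonneg (by linarith) h2N.le
      have hts : t ≤ s := by
        rw [ht_def, hs_def, div_le_div_iff₀ h2N h2N]
        nlinarith
      have hs1 : s ≤ 1 := by
        rw [hs_def, div_le_one h2N]
        nlinarith [mul_le_mul_of_nonneg_left hu1 hm0.le]
      have hty : t ≤ y := by
        rw [ht_def, div_le_iff₀ h2N]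
        linarith [h1]
      have htq : t ^ q ≤ y ^ q := Real.rpow_le_rpow ht0 hty hq0
      have hA : s ^ q - t ^ q ≤ q * (s - t) := lemA ht0 hts hs1 hq1
      have hst : q * (s - t) = c / (2*N - 1) := by
        rw [hq_def, hs_def, ht_def]
        field_simp
        ring
      -- constant part
      have hC : (2*N - 2)/(2*N - 1) ≤ ((2*N - 1)/(2*N)) ^ q := by
        have := lemC hm3
        have e1 : (2*N - 1 - 1) = 2*N - 2 := by ring
        have e2 : (2*N - 1 + 1) = 2*N := by ring
        rw [e1, e2] at this
        rw [hq_def]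
        exact this
      have hsq : s ^ q = ((2*N - 1)/(2*N)) ^ q * u ^ q := by
        have : s = ((2*N - 1)/(2*N)) * u := by rw [hs_def]; ring
        rw [this, Real.mul_rpow (by positivity) hu0]
      have huqr : u ^ r ≤ u ^ q := Real.rpow_le_rpow_of_exponent_ge' hu0 hu1 hq0 hqr
      have hB : (2*N - 2) * u ^ r ≤ (2*N - 1) * s ^ q := by
        rw [hsq]
        have e2 : (2*N - 2) ≤ (2*N - 1) * (((2*N - 1)/(2*N)) ^ q) := by
          rw [div_le_iff₀ hm0] at hC
          linarith
        calc (2*N - 2) * u ^ r ≤ (2*N - 2) * u ^ q := mul_le_mul_of_nonneg_left huqr hm1.le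
          _ ≤ ((2*N - 1) * (((2*N - 1)/(2*N)) ^ q)) * u ^ q := by
              apply mul_le_mul_of_nonneg_right e2 (Real.rpow_nonneg hu0 q)
          _ = (2*N - 1) * (((2*N - 1)/(2*N)) ^ q * u ^ q) := by ring
      -- combine
      have hAc : (2*N - 1) * s ^ q ≤ (2*N - 1) * t ^ q + c := by
        have h6 := mul_le_mul_of_nonneg_left hA hm0.le
        rw [hst] at h6
        have h7 : (2*N - 1) * (c/(2*N - 1)) = c := by field_simp
        have h8 : (2*N - 1) * (s ^ q - t ^ q) = (2*N - 1) * s ^ q - (2*N - 1) * t ^ q := by ring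
        linarith
      have htq' : (2*N - 1) * t ^ q ≤ (2*N - 1) * y ^ q := mul_le_mul_of_nonneg_left htq hm0.le
      linarith
  rw [hxp]
  linarith [h2, key]

/-- Any feasible `θ` (for parameter `k ≥ 2`) satisfies `1 ≤ 1/θ`. -/
lemma aux_one_le {k : ℕ} (hk : 2 ≤ k) {θ : ℝ}
    {z : ℕ → ℝ} (hzk : z k = 0)
    (hbd : ∀ i, 1 ≤ i → i ≤ k - 1 → z i ∈ Set.Icc (0:ℝ) 1)
    (hcon : ∀ I, I ≤ k - 1 →
      ((k:ℝ) - 1) * z I ^ ((k:ℝ)/((k:ℝ) - 1)) ≤ (k:ℝ) * z (I+1) + 1/θ - 1) :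
    1 ≤ 1/θ := by
  have h := hcon (k-1) le_rfl
  have hk1 : k - 1 + 1 = k := by omega
  rw [hk1, hzk, mul_zero] at h
  have hz := hbd (k-1) (by omega) le_rfl
  have hk2 : (2:ℝ) ≤ (k:ℝ) := by exact_mod_cast hk
  have hnn : (0:ℝ) ≤ ((k:ℝ) - 1) * z (k-1) ^ ((k:ℝ)/((k:ℝ) - 1)) :=
    mul_nonneg (by linarith) (Real.rpow_nonneg hz.1 _)
  linarith

lemma sSup_le_sSup_aux {A B : Set ℝ} (h : B ⊆ A) (hA1 : ∀ x ∈ A, x ≤ 1)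
    (hA0 : ∀ x ∈ A, 0 ≤ x) : sSup B ≤ sSup A := by
  rcases B.eq_empty_or_nonempty with rfl | hB
  · rw [Real.sSup_empty]
    exact Real.sSup_nonneg hA0
  · exact csSup_le_csSup ⟨1, fun x hx => hA1 x hx⟩ hB h

/-- Lemma `Incn`: `LPrelax_n ≥ LPrelax_{2n}`. -/
theorem stmt18 (n : ℕ) (hn : 2 ≤ n) : LPrelax n ≥ LPrelax (2 * n) := by
  rw [ge_iff_le, LPrelax, LPrelax]
  have hsub : {θ : ℝ | 0 < θ ∧ ∃ z : ℕ → ℝ, z 0 = 1 ∧ z (2*n) = 0 ∧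
      (∀ i, 1 ≤ i → i ≤ 2*n - 1 → z i ∈ Set.Icc (0:ℝ) 1) ∧
      (∀ I, I ≤ 2*n - 1 →
        (((2*n : ℕ) : ℝ) - 1) * z I ^ (((2*n : ℕ) : ℝ) / (((2*n : ℕ) : ℝ) - 1)) ≤
          ((2*n : ℕ) : ℝ) * z (I+1) + 1/θ - 1)} ⊆
    {θ : ℝ | 0 < θ ∧ ∃ z : ℕ → ℝ, z 0 = 1 ∧ z n = 0 ∧
      (∀ i, 1 ≤ i → i ≤ n - 1 → z i ∈ Set.Icc (0:ℝ) 1) ∧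
      (∀ I, I ≤ n - 1 →
        ((n : ℝ) - 1) * z I ^ ((n : ℝ) / ((n : ℝ) - 1)) ≤ (n : ℝ) * z (I+1) + 1/θ - 1)} := by
    rintro θ ⟨hpos, z, hz0, hz2n, hbd, hcon⟩
    have hc : 1 ≤ 1/θ := aux_one_le (by omega : 2 ≤ 2*n) hz2n hbd hcon
    have hN : (2:ℝ) ≤ (n:ℝ) := by exact_mod_cast hn
    refine ⟨hpos, fun i => z (2*i), hz0, hz2n, ?_, ?_⟩
    · intro i h1 h2
      exact hbd (2*i) (by omega) (by omega)
    · intro I hI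
      have hx := hcon (2*I) (by omega)
      have hy := hcon (2*I+1) (by omega)
      have hxmem : 0 ≤ z (2*I) ∧ z (2*I) ≤ 1 := by
        rcases Nat.eq_zero_or_pos I with rfl | hIpos
        · norm_num [hz0]
        · have := hbd (2*I) (by omega) (by omega)
          exact ⟨this.1, this.2⟩
      have hymem := hbd (2*I+1) (by omega) (by omega)
      have hidx : 2*(I+1) = 2*I+1+1 := by omega
      show ((n : ℝ) - 1) * z (2*I) ^ ((n : ℝ) / ((n : ℝ) - 1)) ≤
        (n : ℝ) * z (2*(I+1)) + 1/θ - 1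
      rw [hidx]
      push_cast at hx hy
      have := step (c := 1/θ - 1) (x := z (2*I)) (y := z (2*I+1)) (v := z (2*I+1+1)) hN (by linarith) hxmem.1 hxmem.2 hymem.1
        (by linarith [hx]) (by linarith [hy])
      linarith [this]
  exact sSup_le_sSup_aux hsub
    (fun θ hθ => by
      obtain ⟨hpos, z, hz0, hzn, hbd, hcon⟩ := hθ
      have h1 := aux_one_le hn hzn hbd hcon
      exact (one_le_div hpos).mp h1)
    (fun θ hθ => hθ.1.le)
end
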